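/- Let S ⊆ ℝ², let a, b ∈ ℝ² with a ≠ b and segment ℝ a b ⊆ S, and let c ∈ S be a point not on the affine line through a and b. Suppose that for any two distinct points p, q ∈ S there exists r ∈ S with r ≠ p, r ≠ q and p, q, r collinear (i.e. no line meets S in exactly two points). Then the set S \ (segment ℝ a b ∪ {c}) is infinite. -/
import Mathlib


theorem infinite_off_segment (S : Set (EuclideanSpace ℝ (Fin 2)))
    (a b : EuclideanSpace ℝ (Fin 2)) (hab : a ≠ b)
    (hseg : segment ℝ a b ⊆ S)
    (c : EuclideanSpace ℝ (Fin 2)) (hcS : c ∈ S)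
    (hc : c ∉ (affineSpan ℝ ({a, b} : Set (EuclideanSpace ℝ (Fin 2))) :
      Set (EuclideanSpace ℝ (Fin 2))))
    (h : ∀ p ∈ S, ∀ q ∈ S, p ≠ q →
      ∃ r ∈ S, r ≠ p ∧ r ≠ q ∧ Collinear ℝ ({p, q, r} : Set (EuclideanSpace ℝ (Fin 2)))) :
    (S \ (segment ℝ a b ∪ {c})).Infinite := by
  -- every point of the segment lies in the affine span of {a, b}
  have hsegspan : segment ℝ a b ⊆ (affineSpan ℝ ({a, b} : Set (EuclideanSpace ℝ (Fin 2))) :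
      Set (EuclideanSpace ℝ (Fin 2))) := by
    intro x hx
    have : x ∈ convexHull ℝ ({a, b} : Set (EuclideanSpace ℝ (Fin 2))) := by
      rwa [convexHull_pair]
    exact convexHull_subset_affineSpan _ this
  -- key claim: for every x in the segment, find r ∈ S off segment ∪ {c} on line c x
  have key : ∀ x ∈ segment ℝ a b, ∃ r ∈ S, r ∉ segment ℝ a b ∪ {c} ∧ r ≠ c ∧
      x ∈ affineSpan ℝ ({c, r} : Set (EuclideanSpace ℝ (Fin 2))) := by
    intro x hx
    have hxspan := hsegspan hx
    have hcx : c ≠ x := fun hcx => hc (hcx ▸ hxspan)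
    obtain ⟨r, hrS, hrc, hrx, hcol⟩ := h c hcS x (hseg hx) hcx
    refine ⟨r, hrS, ?_, hrc, ?_⟩
    · rintro (hrseg | hrc')
      · -- r on the segment, r ≠ x : then c ∈ line[x, r] ⊆ line[a, b]
        have hxr : x ∈ affineSpan ℝ ({a, b} : Set (EuclideanSpace ℝ (Fin 2))) := hxspan
        have hrr : r ∈ affineSpan ℝ ({a, b} : Set (EuclideanSpace ℝ (Fin 2))) := hsegspan hrseg
        have hcmem : c ∈ affineSpan ℝ ({x, r} : Set (EuclideanSpace ℝ (Fin 2))) :=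
          hcol.mem_affineSpan_of_mem_of_ne (Set.mem_insert_of_mem _ (Set.mem_insert _ _))
            (Set.mem_insert_of_mem _ (Set.mem_insert_of_mem _ rfl))
            (Set.mem_insert _ _) (Ne.symm hrx)
        have : affineSpan ℝ ({x, r} : Set (EuclideanSpace ℝ (Fin 2))) ≤
            affineSpan ℝ ({a, b} : Set (EuclideanSpace ℝ (Fin 2))) := by
          rw [affineSpan_le]
          rintro y (rfl | rfl) <;> assumption
        exact hc (this hcmem)
      · exact hrc (Set.mem_singleton_iff.mp hrc')
    · exact hcol.mem_affineSpan_of_mem_of_ne (Set.mem_insert _ _)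
        (Set.mem_insert_of_mem _ (Set.mem_insert_of_mem _ rfl))
        (Set.mem_insert_of_mem _ (Set.mem_insert _ _)) hrc.symm
  -- choice function
  choose! f hfS hfoff hfc hfmem using key
  -- f is injective on the segment
  have hinj : Set.InjOn f (segment ℝ a b) := by
    intro x hx y hy hxy
    by_contra hne
    have hxm := hfmem x hx
    have hym := hfmem y hy
    rw [hxy] at hxm
    have hcol4 : Collinear ℝ ({x, y, c, f y} : Set (EuclideanSpace ℝ (Fin 2))) :=
      collinear_insert_insert_of_mem_affineSpan_pair hxm hym
    have hcmem : c ∈ affineSpan ℝ ({x, y} : Set (EuclideanSpace ℝ (Fin 2))) :=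
      hcol4.mem_affineSpan_of_mem_of_ne (Set.mem_insert _ _)
        (Set.mem_insert_of_mem _ (Set.mem_insert _ _))
        (Set.mem_insert_of_mem _ (Set.mem_insert_of_mem _ (Set.mem_insert _ _))) hne
    have : affineSpan ℝ ({x, y} : Set (EuclideanSpace ℝ (Fin 2))) ≤
        affineSpan ℝ ({a, b} : Set (EuclideanSpace ℝ (Fin 2))) := by
      rw [affineSpan_le]
      rintro z (rfl | rfl)
      · exact hsegspan hx
      · exact hsegspan hy
    exact hc (this hcmem)
  have hmaps : Set.MapsTo f (segment ℝ a b) (S \ (segment ℝ a b ∪ {c})) := fun x hx =>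
    ⟨hfS x hx, hfoff x hx⟩
  have hseginf : (segment ℝ a b).Infinite := by
    rw [segment_eq_image_lineMap]
    exact (Set.Icc_infinite (by norm_num : (0:ℝ) < 1)).image
      ((AffineMap.lineMap_injective ℝ hab).injOn)
  exact Set.infinite_of_injOn_mapsTo hinj hmaps hseginf
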